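/- Every 2-finite matrix is skew-symmetrizable. -/

import Mathlib

/-- Matrix mutation in direction `k` for integer matrices. -/
def mutZ {n : ℕ} (k : Fin n) (B : Matrix (Fin n) (Fin n) ℤ) : Matrix (Fin n) (Fin n) ℤ :=
  Matrix.of fun i j =>
    if i = k ∨ j = k then -B i j
    else B i j + (|B i k| * B k j + B i k * |B k j|) / 2

/-- Sign-skew-symmetry for integer matrices. -/
def SignSkewSymmetric {n : ℕ} (B : Matrix (Fin n) (Fin n) ℤ) : Prop :=
  ∀ i j, (B i j = 0 ∧ B j i = 0) ∨ B i j * B j i < 0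

/-- An integer matrix is 2-finite if every matrix obtained from it by a finite
sequence of mutations is sign-skew-symmetric with `|b'_ij b'_ji| ≤ 3`. -/
def TwoFinite {n : ℕ} (B : Matrix (Fin n) (Fin n) ℤ) : Prop :=
  ∀ l : List (Fin n),
    SignSkewSymmetric (l.foldl (fun M k => mutZ k M) B) ∧
    ∀ i j, |(l.foldl (fun M k => mutZ k M) B) i j *
            (l.foldl (fun M k => mutZ k M) B) j i| ≤ 3

-- ### phase 1: triangle lemma
namespace TFaux

abbrev muts {n : ℕ} (l : List (Fin n)) (B : Matrix (Fin n) (Fin n) ℤ) :=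
  l.foldl (fun M k => mutZ k M) B

lemma tf_mut {n : ℕ} {B : Matrix (Fin n) (Fin n) ℤ} (h : TwoFinite B) (k : Fin n) :
    TwoFinite (mutZ k B) := fun l => h (k :: l)

lemma tf_sss {n : ℕ} {B : Matrix (Fin n) (Fin n) ℤ} (h : TwoFinite B) :
    SignSkewSymmetric B := (h []).1

lemma tf_bdd {n : ℕ} {B : Matrix (Fin n) (Fin n) ℤ} (h : TwoFinite B) :
    ∀ i j, |B i j * B j i| ≤ 3 := (h []).2

lemma sss_diag {n : ℕ} {B : Matrix (Fin n) (Fin n) ℤ}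
    (h : SignSkewSymmetric B) (i : Fin n) : B i i = 0 := by
  rcases h i i with ⟨h1, _⟩ | h1
  · exact h1
  · nlinarith [sq_nonneg (B i i)]

lemma sss_ne {n : ℕ} {B : Matrix (Fin n) (Fin n) ℤ}
    (h : SignSkewSymmetric B) {i j : Fin n} (hij : B i j ≠ 0) : B j i ≠ 0 := by
  rcases h i j with ⟨h1, h2⟩ | h1
  · exact absurd h1 hij
  · intro hz; rw [hz, mul_zero] at h1; exact absurd h1 (lt_irrefl 0)

lemma submatrix_mutZ {n : ℕ} (e : Fin 3 → Fin n) (he : Function.Injective e)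
    (k : Fin 3) (B : Matrix (Fin n) (Fin n) ℤ) :
    (mutZ (e k) B).submatrix e e = mutZ k (B.submatrix e e) := by
  ext i j
  simp only [Matrix.submatrix_apply, mutZ, Matrix.of_apply, he.eq_iff]

lemma muts_submatrix {n : ℕ} (e : Fin 3 → Fin n) (he : Function.Injective e)
    (l : List (Fin 3)) (B : Matrix (Fin n) (Fin n) ℤ) :
    muts l (B.submatrix e e) = (muts (l.map e) B).submatrix e e := by
  induction l generalizing B with
  | nil => rfl
  | cons k l ih =>
      show muts l (mutZ k (B.submatrix e e)) = _
      rw [← submatrix_mutZ e he, ih]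
      rfl

lemma tf_submatrix {n : ℕ} {B : Matrix (Fin n) (Fin n) ℤ} (h : TwoFinite B)
    (e : Fin 3 → Fin n) (he : Function.Injective e) : TwoFinite (B.submatrix e e) := by
  intro l
  rw [show (l.foldl (fun M k => mutZ k M) (B.submatrix e e)) = muts l (B.submatrix e e) from rfl,
    muts_submatrix e he]
  exact ⟨fun i j => (h (l.map e)).1 (e i) (e j), fun i j => (h (l.map e)).2 (e i) (e j)⟩

def good3 (C : Matrix (Fin 3) (Fin 3) ℤ) : Prop :=
  ∀ i j : Fin 3, ((C i j = 0 ∧ C j i = 0) ∨ C i j * C j i < 0) ∧ |C i j * C j i| ≤ 3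

instance : DecidablePred good3 := fun _ => by
  unfold good3
  exact @Nat.decidableForallFin _ _ (fun i => @Nat.decidableForallFin _ _ (fun j => instDecidableAnd))

def P10 : List (ℤ × ℤ) := [(1,-1),(-1,1),(1,-2),(-2,1),(2,-1),(-1,2),(1,-3),(-3,1),(3,-1),(-1,3)]

lemma pair_mem {x y : ℤ} (hx : x ≠ 0) (h : (x = 0 ∧ y = 0) ∨ x * y < 0)
    (hb : |x * y| ≤ 3) : (x, y) ∈ P10 := by
  rcases h with ⟨h1, _⟩ | h1
  · exact absurd h1 hx
  have hy : y ≠ 0 := by rintro rfl; simp at h1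
  have hax : |x| ≤ 3 := by
    calc |x| = |x| * 1 := (mul_one _).symm
    _ ≤ |x| * |y| := by
        have : (1:ℤ) ≤ |y| := Int.one_le_abs hy
        exact mul_le_mul_of_nonneg_left this (abs_nonneg x)
    _ = |x * y| := (abs_mul x y).symm
    _ ≤ 3 := hb
  have hay : |y| ≤ 3 := by
    calc |y| = 1 * |y| := (one_mul _).symm
    _ ≤ |x| * |y| := by
        have : (1:ℤ) ≤ |x| := Int.one_le_abs hx
        exact mul_le_mul_of_nonneg_right this (abs_nonneg y)
    _ = |x * y| := (abs_mul x y).symm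
    _ ≤ 3 := hb
  have hx3 : -3 ≤ x ∧ x ≤ 3 := abs_le.mp hax
  have hy3 : -3 ≤ y ∧ y ≤ 3 := abs_le.mp hay
  obtain ⟨hx1, hx2⟩ := hx3
  obtain ⟨hy1, hy2⟩ := hy3
  clear hax hay
  interval_cases x <;> interval_cases y <;> revert h1 hb <;> decide

def M3 (p q r : ℤ × ℤ) : Matrix (Fin 3) (Fin 3) ℤ :=
  !![0, p.1, r.2; p.2, 0, q.1; r.1, q.2, 0]

set_option maxRecDepth 100000 in
set_option maxHeartbeats 8000000 in
lemma key : ∀ p ∈ P10, ∀ q ∈ P10, ∀ r ∈ P10,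
    (∀ k : Fin 3, good3 (mutZ k (M3 p q r))) →
    |p.1 * q.1 * r.1| = |p.2 * q.2 * r.2| := by decide

end TFaux

namespace TFaux

lemma tri3 (C : Matrix (Fin 3) (Fin 3) ℤ) (h : TwoFinite C)
    (h01 : C 0 1 ≠ 0) (h12 : C 1 2 ≠ 0) (h20 : C 2 0 ≠ 0) :
    |C 0 1 * C 1 2 * C 2 0| = |C 1 0 * C 2 1 * C 0 2| := by
  have hs := tf_sss h
  have hb := tf_bdd h
  have hp : ((C 0 1, C 1 0) : ℤ × ℤ) ∈ P10 := pair_mem h01 (hs 0 1) (hb 0 1)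
  have hq : ((C 1 2, C 2 1) : ℤ × ℤ) ∈ P10 := pair_mem h12 (hs 1 2) (hb 1 2)
  have hr : ((C 2 0, C 0 2) : ℤ × ℤ) ∈ P10 := pair_mem h20 (hs 2 0) (hb 2 0)
  have hC : C = M3 (C 0 1, C 1 0) (C 1 2, C 2 1) (C 2 0, C 0 2) := by
    conv_lhs => rw [Matrix.eta_fin_three C]
    simp [M3, sss_diag hs]
  have hg : ∀ k : Fin 3, good3 (mutZ k (M3 (C 0 1, C 1 0) (C 1 2, C 2 1) (C 2 0, C 0 2))) := by
    rw [← hC]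
    intro k i j
    exact ⟨tf_sss (tf_mut h k) i j, tf_bdd (tf_mut h k) i j⟩
  exact key _ hp _ hq _ hr hg

lemma triangle {n : ℕ} {B : Matrix (Fin n) (Fin n) ℤ} (h : TwoFinite B) {i j k : Fin n}
    (hij : i ≠ j) (hjk : j ≠ k) (hik : i ≠ k)
    (h1 : B i j ≠ 0) (h2 : B j k ≠ 0) (h3 : B k i ≠ 0) :
    |B i j * B j k * B k i| = |B j i * B k j * B i k| := by
  have he : Function.Injective (![i, j, k] : Fin 3 → Fin n) := by
    intro a b hab
    fin_cases a <;> fin_cases b <;> simp_all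
  have := tri3 (B.submatrix ![i,j,k] ![i,j,k]) (tf_submatrix h _ he)
    (by simpa using h1) (by simpa using h2) (by simpa using h3)
  simpa using this

end TFaux
namespace TFaux

def pF {n : ℕ} (B : Matrix (Fin n) (Fin n) ℤ) (m : ℕ) (v : ℕ → Fin n) : ℤ :=
  ∏ t ∈ Finset.range m, |B (v t) (v (t + 1))|

def pG {n : ℕ} (B : Matrix (Fin n) (Fin n) ℤ) (m : ℕ) (v : ℕ → Fin n) : ℤ :=
  ∏ t ∈ Finset.range m, |B (v (t + 1)) (v t)|

lemma prod_shift1 (f : ℕ → ℤ) (m : ℕ) (hf : ∀ t, f (t + m) = f t) :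
    ∏ t ∈ Finset.range m, f (t + 1) = ∏ t ∈ Finset.range m, f t := by
  cases m with
  | zero => simp
  | succ s =>
      rw [Finset.prod_range_succ]
      have h0 : f (s + 1) = f 0 := by have := hf 0; rwa [Nat.zero_add] at this
      rw [h0, Finset.prod_range_succ']

lemma prod_shift (f : ℕ → ℤ) (m : ℕ) (hf : ∀ t, f (t + m) = f t) (r : ℕ) :
    ∏ t ∈ Finset.range m, f (t + r) = ∏ t ∈ Finset.range m, f t := by
  induction r with
  | zero => simp
  | succ r ih =>
      have h1 : ∀ t, (fun u => f (u + r)) (t + m) = (fun u => f (u + r)) t := by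
        intro t
        simp only []
        rw [show t + m + r = t + r + m by ring, hf]
      calc ∏ t ∈ Finset.range m, f (t + (r + 1))
          = ∏ t ∈ Finset.range m, (fun u => f (u + r)) (t + 1) := by
            apply Finset.prod_congr rfl; intro t _
            simp only []
            congr 1
            ring
        _ = ∏ t ∈ Finset.range m, f (t + r) := prod_shift1 (fun u => f (u + r)) m h1
        _ = ∏ t ∈ Finset.range m, f t := ih

lemma vper_mul {n : ℕ} {m : ℕ} {v : ℕ → Fin n} (hper : ∀ t, v (t + m) = v t) :
    ∀ k s, v (s + k * m) = v s := by
  intro k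
  induction k with
  | zero => simp
  | succ k ih =>
      intro s
      rw [show s + (k + 1) * m = s + k * m + m by ring, hper, ih]

lemma vmod {n : ℕ} {m : ℕ} {v : ℕ → Fin n} (hper : ∀ t, v (t + m) = v t) (s : ℕ) :
    v s = v (s % m) := by
  conv_lhs => rw [show s = s % m + s / m * m by
    rw [mul_comm]; exact (Nat.mod_add_div s m).symm]
  exact vper_mul hper (s / m) (s % m)

lemma veq {n : ℕ} {m : ℕ} {v : ℕ → Fin n} (hper : ∀ t, v (t + m) = v t)
    {s t : ℕ} (h : s % m = t % m) : v s = v t := by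
  rw [vmod hper s, vmod hper t, h]

lemma mod_succ (t m : ℕ) : (t + 1) % m = (t % m + 1) % m :=
  ((Nat.mod_modEq t m).symm.add_right 1 : _)

lemma fper {n : ℕ} (B : Matrix (Fin n) (Fin n) ℤ) {m : ℕ} {v : ℕ → Fin n}
    (hper : ∀ t, v (t + m) = v t) :
    ∀ t, |B (v (t + m)) (v (t + m + 1))| = |B (v t) (v (t + 1))| := by
  intro t
  rw [hper t, show t + m + 1 = t + 1 + m by ring, hper (t + 1)]

lemma gper {n : ℕ} (B : Matrix (Fin n) (Fin n) ℤ) {m : ℕ} {v : ℕ → Fin n}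
    (hper : ∀ t, v (t + m) = v t) :
    ∀ t, |B (v (t + m + 1)) (v (t + m))| = |B (v (t + 1)) (v t)| := by
  intro t
  rw [hper t, show t + m + 1 = t + 1 + m by ring, hper (t + 1)]

def CycClaim (m : ℕ) : Prop :=
  ∀ {n : ℕ} (B : Matrix (Fin n) (Fin n) ℤ), TwoFinite B →
    ∀ v : ℕ → Fin n, (∀ t, v (t + m) = v t) → (∀ t, B (v t) (v (t + 1)) ≠ 0) →
      pF B m v = pG B m v

lemma edge_of_lt {n : ℕ} {L : ℕ} (hL : 0 < L) {w : ℕ → Fin n}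
    (hw : ∀ t, w t = w (t % L)) {B' : Matrix (Fin n) (Fin n) ℤ}
    (h : ∀ r, r < L → B' (w r) (w (r + 1)) ≠ 0) :
    ∀ t, B' (w t) (w (t + 1)) ≠ 0 := by
  intro t
  have h2 : w (t + 1) = w (t % L + 1) := by
    rw [hw (t + 1), mod_succ, ← hw (t % L + 1)]
  rw [hw t, h2]
  exact h _ (Nat.mod_lt _ hL)

/-- splitting a cycle at a repeated vertex -/
lemma cyc_repeat {m : ℕ} (IH : ∀ m' < m, CycClaim m') {n : ℕ}
    (B : Matrix (Fin n) (Fin n) ℤ) (h2f : TwoFinite B) (v : ℕ → Fin n)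
    (hper : ∀ t, v (t + m) = v t) (hedge : ∀ t, B (v t) (v (t + 1)) ≠ 0)
    (a b : ℕ) (hab : a < b) (hbm : b < m) (hv : v a = v b) :
    pF B m v = pG B m v := by
  set d := b - a with hd
  set e := m - d with he
  have hd1 : 1 ≤ d := by omega
  have hdm : d < m := by omega
  have he1 : 1 ≤ e := by omega
  have hem : e < m := by omega
  set w : ℕ → Fin n := fun t => v (a + t % d) with hw
  set u : ℕ → Fin n := fun t => v (b + t % e) with hu
  have hww : ∀ t, w t = w (t % d) := by
    intro t; simp only [hw, Nat.mod_mod_of_dvd _ dvd_rfl]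
  have huu : ∀ t, u t = u (t % e) := by
    intro t; simp only [hu, Nat.mod_mod_of_dvd _ dvd_rfl]
  have hwlt : ∀ r, r < d → w r = v (a + r) := by
    intro r hr; simp only [hw, Nat.mod_eq_of_lt hr]
  have hwsucc : ∀ r, r < d → w (r + 1) = v (a + r + 1) := by
    intro r hr
    rcases Nat.lt_or_ge (r + 1) d with h | h
    · simp only [hw, Nat.mod_eq_of_lt h]; rw [Nat.add_assoc]
    · have h1 : r + 1 = d := by omega
      simp only [hw, h1, Nat.mod_self, Nat.add_zero]
      rw [hv, show a + r + 1 = b by omega]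
  have hult : ∀ r, r < e → u r = v (b + r) := by
    intro r hr; simp only [hu, Nat.mod_eq_of_lt hr]
  have husucc : ∀ r, r < e → u (r + 1) = v (b + r + 1) := by
    intro r hr
    rcases Nat.lt_or_ge (r + 1) e with h | h
    · simp only [hu, Nat.mod_eq_of_lt h]; rw [Nat.add_assoc]
    · have h1 : r + 1 = e := by omega
      simp only [hu, h1, Nat.mod_self, Nat.add_zero]
      have h2 : v (b + r + 1) = v (a + m) := by rw [show b + r + 1 = a + m by omega]
      rw [h2, hper, hv]
  have hperw : ∀ t, w (t + d) = w t := by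
    intro t; simp only [hw, Nat.add_mod_right]
  have hperu : ∀ t, u (t + e) = u t := by
    intro t; simp only [hu, Nat.add_mod_right]
  have hedgw : ∀ t, B (w t) (w (t + 1)) ≠ 0 := by
    apply edge_of_lt (by omega) hww
    intro r hr
    rw [hwlt r hr, hwsucc r hr]
    exact hedge (a + r)
  have hedgu : ∀ t, B (u t) (u (t + 1)) ≠ 0 := by
    apply edge_of_lt (by omega) huu
    intro r hr
    rw [hult r hr, husucc r hr]
    exact hedge (b + r)
  have h1 : pF B m v = pF B d w * pF B e u := by
    unfold pF
    rw [show (∏ t ∈ Finset.range m, |B (v t) (v (t + 1))|)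
        = ∏ t ∈ Finset.range m, |B (v (t + a)) (v (t + a + 1))| from
      (prod_shift _ m (fper B hper) a).symm]
    rw [show m = d + e by omega, Finset.prod_range_add]
    congr 1
    · apply Finset.prod_congr rfl; intro r hr
      rw [Finset.mem_range] at hr
      rw [hwlt r hr, hwsucc r hr, show r + a = a + r by ring, show a + r + 1 = a + r + 1 from rfl]
    · apply Finset.prod_congr rfl; intro r hr
      rw [Finset.mem_range] at hr
      rw [hult r hr, husucc r hr, show d + r + a = b + r by omega]
  have h2 : pG B m v = pG B d w * pG B e u := by
    unfold pG
    rw [show (∏ t ∈ Finset.range m, |B (v (t + 1)) (v t)|)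
        = ∏ t ∈ Finset.range m, |B (v (t + a + 1)) (v (t + a))| from
      (prod_shift _ m (gper B hper) a).symm]
    rw [show m = d + e by omega, Finset.prod_range_add]
    congr 1
    · apply Finset.prod_congr rfl; intro r hr
      rw [Finset.mem_range] at hr
      rw [hwlt r hr, hwsucc r hr, show r + a = a + r by ring]
    · apply Finset.prod_congr rfl; intro r hr
      rw [Finset.mem_range] at hr
      rw [hult r hr, husucc r hr, show d + r + a = b + r by omega]
  rw [h1, h2, IH d hdm B h2f w hperw hedgw, IH e hem B h2f u hperu hedgu]

end TFaux
namespace TFaux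

def adjc (m s t : ℕ) : Prop :=
  s = t ∨ t = s + 1 ∨ s = t + 1 ∨ (s = 0 ∧ t + 1 = m) ∨ (t = 0 ∧ s + 1 = m)

/-- splitting a cycle along a chord -/
lemma cyc_chord {m : ℕ} (IH : ∀ m' < m, CycClaim m') {n : ℕ}
    (B : Matrix (Fin n) (Fin n) ℤ) (h2f : TwoFinite B) (v : ℕ → Fin n)
    (hper : ∀ t, v (t + m) = v t) (hedge : ∀ t, B (v t) (v (t + 1)) ≠ 0)
    (s t : ℕ) (hs : s < m) (ht : t < m) (hadj : ¬adjc m s t)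
    (hBst : B (v s) (v t) ≠ 0) :
    pF B m v = pG B m v := by
  have hcb : B (v t) (v s) ≠ 0 := sss_ne (tf_sss h2f) hBst
  obtain ⟨d, hd2, hdm2, hvd⟩ : ∃ d, 2 ≤ d ∧ d ≤ m - 2 ∧ v (s + d) = v t := by
    rcases Nat.lt_or_ge s t with h | h
    · refine ⟨t - s, ?_, ?_, ?_⟩
      · unfold adjc at hadj; omega
      · unfold adjc at hadj; omega
      · rw [show s + (t - s) = t by omega]
    · have hlt : t < s := by unfold adjc at hadj; omega
      refine ⟨t + m - s, ?_, ?_, ?_⟩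
      · unfold adjc at hadj; omega
      · unfold adjc at hadj; omega
      · rw [show s + (t + m - s) = t + m by omega, hper]
  have hm4 : 4 ≤ m := by omega
  set e := m - d with he
  set L1 := d + 1 with hL1
  set L2 := e + 1 with hL2
  set c0 := s + d - 1 with hc0
  have hc01 : c0 + 1 = s + d := by omega
  set w : ℕ → Fin n := fun r => v (s + r % L1) with hw
  set u : ℕ → Fin n := fun r => if r % L2 = 0 then v s else v (c0 + r % L2) with hu
  have hww : ∀ r, w r = w (r % L1) := by
    intro r; simp only [hw, Nat.mod_mod_of_dvd _ dvd_rfl]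
  have huu : ∀ r, u r = u (r % L2) := by
    intro r; simp only [hu, Nat.mod_mod_of_dvd _ dvd_rfl]
  have hperw : ∀ r, w (r + L1) = w r := by
    intro r; simp only [hw, Nat.add_mod_right]
  have hperu : ∀ r, u (r + L2) = u r := by
    intro r; simp only [hu, Nat.add_mod_right]
  have hwlt : ∀ r, r < L1 → w r = v (s + r) := by
    intro r hr; simp only [hw, Nat.mod_eq_of_lt hr]
  have hwsucc : ∀ r, r < d → w (r + 1) = v (s + r + 1) := by
    intro r hr
    rw [hwlt (r + 1) (by omega), Nat.add_assoc]
  have hwd1 : w (d + 1) = v s := by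
    simp only [hw, hL1, Nat.mod_self, Nat.add_zero]
  have hult : ∀ r, 1 ≤ r → r < L2 → u r = v (c0 + r) := by
    intro r h1 hr; simp only [hu, Nat.mod_eq_of_lt hr]
    rw [if_neg (by omega)]
  have hu0 : u 0 = v s := by simp [hu]
  have husucc : ∀ r, 1 ≤ r → r < L2 → u (r + 1) = v (c0 + r + 1) := by
    intro r h1 hr
    rcases Nat.lt_or_ge (r + 1) L2 with h | h
    · rw [hult (r + 1) (by omega) h, ← Nat.add_assoc]
    · have h2 : r + 1 = L2 := by omega
      have h3 : u (r + 1) = v s := by simp [hu, h2]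
      rw [h3, show c0 + r + 1 = s + m by omega, hper]
  have hedgw : ∀ r, B (w r) (w (r + 1)) ≠ 0 := by
    apply edge_of_lt (by omega) hww
    intro r hr
    rcases Nat.lt_or_ge r d with h | h
    · rw [hwlt r (by omega), hwsucc r h]; exact hedge (s + r)
    · have h1 : r = d := by omega
      rw [h1, hwlt d (by omega), hwd1, hvd]; exact hcb
  have hedgu : ∀ r, B (u r) (u (r + 1)) ≠ 0 := by
    apply edge_of_lt (by omega) huu
    intro r hr
    rcases Nat.eq_or_lt_of_le (Nat.zero_le r) with h | h
    · rw [← h, hu0, hult 1 le_rfl (by omega), hc01, hvd]; exact hBst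
    · rw [hult r h hr, husucc r h hr]; exact hedge (c0 + r)
  have key1 : pF B L1 w * pF B L2 u = pF B m v * (|B (v t) (v s)| * |B (v s) (v t)|) := by
    unfold pF
    have e1 : ∏ r ∈ Finset.range L1, |B (w r) (w (r + 1))|
        = (∏ r ∈ Finset.range d, |B (v (r + s)) (v (r + s + 1))|) * |B (v t) (v s)| := by
      rw [hL1, Finset.prod_range_succ]
      congr 1
      · apply Finset.prod_congr rfl; intro r hr
        rw [Finset.mem_range] at hr
        rw [hwlt r (by omega), hwsucc r hr, show s + r = r + s by ring]
      · rw [hwlt d (by omega), hwd1, hvd]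
    have e2 : ∏ r ∈ Finset.range L2, |B (u r) (u (r + 1))|
        = |B (v s) (v t)| * ∏ r ∈ Finset.range e, |B (v (d + r + s)) (v (d + r + s + 1))| := by
      rw [hL2, Finset.prod_range_succ']
      rw [mul_comm]
      congr 1
      · rw [hu0, hult 1 le_rfl (by omega), hc01, hvd]
      · apply Finset.prod_congr rfl; intro r hr
        rw [Finset.mem_range] at hr
        rw [hult (r + 1) (by omega) (by omega), husucc (r + 1) (by omega) (by omega)]
        rw [show c0 + (r + 1) = d + r + s by omega]
    rw [e1, e2]
    rw [show (∏ r ∈ Finset.range m, |B (v r) (v (r + 1))|)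
        = ∏ r ∈ Finset.range m, |B (v (r + s)) (v (r + s + 1))| from
      (prod_shift _ m (fper B hper) s).symm]
    have hsplit : (∏ r ∈ Finset.range m, |B (v (r + s)) (v (r + s + 1))|)
        = (∏ r ∈ Finset.range d, |B (v (r + s)) (v (r + s + 1))|) *
          ∏ r ∈ Finset.range e, |B (v (d + r + s)) (v (d + r + s + 1))| := by
      rw [show m = d + e by omega, Finset.prod_range_add]
    rw [hsplit]
    ring
  have key2 : pG B L1 w * pG B L2 u = pG B m v * (|B (v t) (v s)| * |B (v s) (v t)|) := by
    unfold pG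
    have e1 : ∏ r ∈ Finset.range L1, |B (w (r + 1)) (w r)|
        = (∏ r ∈ Finset.range d, |B (v (r + s + 1)) (v (r + s))|) * |B (v s) (v t)| := by
      rw [hL1, Finset.prod_range_succ]
      congr 1
      · apply Finset.prod_congr rfl; intro r hr
        rw [Finset.mem_range] at hr
        rw [hwlt r (by omega), hwsucc r hr, show s + r = r + s by ring]
      · rw [hwlt d (by omega), hwd1, hvd]
    have e2 : ∏ r ∈ Finset.range L2, |B (u (r + 1)) (u r)|
        = |B (v t) (v s)| * ∏ r ∈ Finset.range e, |B (v (d + r + s + 1)) (v (d + r + s))| := by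
      rw [hL2, Finset.prod_range_succ']
      rw [mul_comm]
      congr 1
      · rw [hu0, hult 1 le_rfl (by omega), hc01, hvd]
      · apply Finset.prod_congr rfl; intro r hr
        rw [Finset.mem_range] at hr
        rw [hult (r + 1) (by omega) (by omega), husucc (r + 1) (by omega) (by omega)]
        rw [show c0 + (r + 1) = d + r + s by omega]
    rw [e1, e2]
    rw [show (∏ r ∈ Finset.range m, |B (v (r + 1)) (v r)|)
        = ∏ r ∈ Finset.range m, |B (v (r + s + 1)) (v (r + s))| from
      (prod_shift _ m (gper B hper) s).symm]
    have hsplit : (∏ r ∈ Finset.range m, |B (v (r + s + 1)) (v (r + s))|)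
        = (∏ r ∈ Finset.range d, |B (v (r + s + 1)) (v (r + s))|) *
          ∏ r ∈ Finset.range e, |B (v (d + r + s + 1)) (v (d + r + s))| := by
      rw [show m = d + e by omega, Finset.prod_range_add]
    rw [hsplit]
    ring
  have i1 : pF B L1 w = pG B L1 w := IH L1 (by omega) B h2f w hperw hedgw
  have i2 : pF B L2 u = pG B L2 u := IH L2 (by omega) B h2f u hperu hedgu
  have hc : (|B (v t) (v s)| * |B (v s) (v t)|) ≠ 0 :=
    mul_ne_zero (abs_ne_zero.mpr hcb) (abs_ne_zero.mpr hBst)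
  apply mul_right_cancel₀ hc
  rw [← key1, ← key2, i1, i2]

end TFaux
namespace TFaux

lemma mutZ_left {n : ℕ} (B : Matrix (Fin n) (Fin n) ℤ) {k i : Fin n} (j : Fin n)
    (h : i = k) : mutZ k B i j = -B i j := by simp [mutZ, h]

lemma mutZ_right {n : ℕ} (B : Matrix (Fin n) (Fin n) ℤ) (i : Fin n) {k j : Fin n}
    (h : j = k) : mutZ k B i j = -B i j := by simp [mutZ, h]

lemma mutZ_ne_ne {n : ℕ} (B : Matrix (Fin n) (Fin n) ℤ) {k i j : Fin n}
    (hi : i ≠ k) (hj : j ≠ k) :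
    mutZ k B i j = B i j + (|B i k| * B k j + B i k * |B k j|) / 2 := by
  simp [mutZ, hi, hj]

lemma mutZ_corr_left {n : ℕ} (B : Matrix (Fin n) (Fin n) ℤ) {k i j : Fin n}
    (hi : i ≠ k) (hj : j ≠ k) (h : B i k = 0) : mutZ k B i j = B i j := by
  rw [mutZ_ne_ne B hi hj, h]; simp

lemma mutZ_corr_right {n : ℕ} (B : Matrix (Fin n) (Fin n) ℤ) {k i j : Fin n}
    (hi : i ≠ k) (hj : j ≠ k) (h : B k j = 0) : mutZ k B i j = B i j := by
  rw [mutZ_ne_ne B hi hj, h]; simp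

lemma corr_nonpos {x y : ℤ} (h : x * y ≤ 0) : (|x| * y + x * |y|) / 2 = 0 := by
  rcases abs_cases x with ⟨hx1, hx2⟩ | ⟨hx1, hx2⟩ <;>
    rcases abs_cases y with ⟨hy1, hy2⟩ | ⟨hy1, hy2⟩ <;> rw [hx1, hy1]
  · have h0 : x * y = 0 := le_antisymm h (mul_nonneg hx2 hy2)
    rw [h0]; simp
  · rw [show x * y + x * -y = 0 by ring]; simp
  · rw [show -x * y + x * y = 0 by ring]; simp
  · exfalso; nlinarith

lemma chord_abs {x y : ℤ} (h : 0 < x * y) :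
    |(|x| * y + x * |y|) / 2| = |x| * |y| ∧ (|x| * y + x * |y|) / 2 ≠ 0 := by
  rcases mul_pos_iff.mp h with ⟨hx, hy⟩ | ⟨hx, hy⟩
  · rw [abs_of_pos hx, abs_of_pos hy, show x * y + x * y = 2 * (x * y) by ring,
      Int.mul_ediv_cancel_left _ two_ne_zero]
    exact ⟨by rw [abs_of_pos h], ne_of_gt h⟩
  · rw [abs_of_neg hx, abs_of_neg hy, show -x * y + x * -y = 2 * (-(x * y)) by ring,
      Int.mul_ediv_cancel_left _ two_ne_zero]
    constructor
    · rw [abs_of_neg (by omega : -(x * y) < 0)]; ring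
    · omega

lemma sss_neg {n : ℕ} {B : Matrix (Fin n) (Fin n) ℤ} (h : SignSkewSymmetric B)
    {i j : Fin n} (hij : B i j ≠ 0) : B i j * B j i < 0 := by
  rcases h i j with ⟨h1, _⟩ | h1
  · exact absurd h1 hij
  · exact h1

/-- the chord-creation step: mutation at a directed vertex of a chordless cycle -/
lemma step_dir {m : ℕ} (hm : 4 ≤ m) (IH : CycClaim (m - 1)) {n : ℕ}
    (B : Matrix (Fin n) (Fin n) ℤ) (h2f : TwoFinite B) (v : ℕ → Fin n)
    (hper : ∀ t, v (t + m) = v t) (hedge : ∀ t, B (v t) (v (t + 1)) ≠ 0)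
    (hinj : ∀ s t, s < m → t < m → v s = v t → s = t)
    (hz : ∀ s t, s < m → t < m → ¬adjc m s t → B (v s) (v t) = 0)
    (hdir : 0 < B (v 0) (v 1) * B (v 1) (v 2)) :
    pF B m v = pG B m v := by
  have hss := tf_sss h2f
  set B' := mutZ (v 1) B with hB'
  have h2f' : TwoFinite B' := tf_mut h2f (v 1)
  have hne : ∀ s t : ℕ, s < m → t < m → s ≠ t → v s ≠ v t :=
    fun s t hs ht hst h => hst (hinj s t hs ht h)
  have hvm : v m = v 0 := by rw [show m = 0 + m by omega, hper]
  have h02 : B (v 0) (v 2) = 0 := hz 0 2 (by omega) (by omega) (by unfold adjc; omega)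
  have h20 : B (v 2) (v 0) = 0 := hz 2 0 (by omega) (by omega) (by unfold adjc; omega)
  have hv01 : v 0 ≠ v 1 := hne 0 1 (by omega) (by omega) (by omega)
  have hv21 : v 2 ≠ v 1 := hne 2 1 (by omega) (by omega) (by omega)
  have s01 : B (v 0) (v 1) * B (v 1) (v 0) < 0 := sss_neg hss (hedge 0)
  have s12 : B (v 1) (v 2) * B (v 2) (v 1) < 0 := sss_neg hss (hedge 1)
  have hrev : 0 < B (v 2) (v 1) * B (v 1) (v 0) := by nlinarith
  have hc1 : B' (v 0) (v 2)
      = (|B (v 0) (v 1)| * B (v 1) (v 2) + B (v 0) (v 1) * |B (v 1) (v 2)|) / 2 := by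
    rw [hB', mutZ_ne_ne B hv01 hv21, h02, zero_add]
  have hc2 : B' (v 2) (v 0)
      = (|B (v 2) (v 1)| * B (v 1) (v 0) + B (v 2) (v 1) * |B (v 1) (v 0)|) / 2 := by
    rw [hB', mutZ_ne_ne B hv21 hv01, h20, zero_add]
  have habs1 : |B' (v 0) (v 2)| = |B (v 0) (v 1)| * |B (v 1) (v 2)| := by
    rw [hc1]; exact (chord_abs hdir).1
  have hne1 : B' (v 0) (v 2) ≠ 0 := by rw [hc1]; exact (chord_abs hdir).2
  have habs2 : |B' (v 2) (v 0)| = |B (v 2) (v 1)| * |B (v 1) (v 0)| := by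
    rw [hc2]; exact (chord_abs hrev).1
  have hkeep : ∀ r, 2 ≤ r → r < m → B' (v r) (v (r + 1)) = B (v r) (v (r + 1)) := by
    intro r h2 hrm
    have hi : v r ≠ v 1 := hne r 1 hrm (by omega) (by omega)
    have hj : v (r + 1) ≠ v 1 := by
      rcases Nat.lt_or_ge (r + 1) m with h | h
      · exact hne (r + 1) 1 h (by omega) (by omega)
      · rw [show r + 1 = m by omega, hvm]; exact hv01
    rcases Nat.eq_or_lt_of_le h2 with h | h
    · subst h
      exact mutZ_corr_right B hi hj (hz 1 3 (by omega) (by omega) (by unfold adjc; omega))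
    · exact mutZ_corr_left B hi hj (hz r 1 hrm (by omega) (by unfold adjc; omega))
  have hkeepr : ∀ r, 2 ≤ r → r < m → B' (v (r + 1)) (v r) = B (v (r + 1)) (v r) := by
    intro r h2 hrm
    have hj : v r ≠ v 1 := hne r 1 hrm (by omega) (by omega)
    have hi : v (r + 1) ≠ v 1 := by
      rcases Nat.lt_or_ge (r + 1) m with h | h
      · exact hne (r + 1) 1 h (by omega) (by omega)
      · rw [show r + 1 = m by omega, hvm]; exact hv01
    rcases Nat.eq_or_lt_of_le h2 with h | h
    · subst h
      exact mutZ_corr_left B hi hj (hz 3 1 (by omega) (by omega) (by unfold adjc; omega))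
    · exact mutZ_corr_right B hi hj (hz 1 r (by omega) hrm (by unfold adjc; omega))
  -- the shortened cycle
  set L := m - 1 with hL
  have hL3 : 3 ≤ L := by omega
  set u : ℕ → Fin n := fun t => if t % L = 0 then v 0 else v (t % L + 1) with hu
  have huu : ∀ t, u t = u (t % L) := by
    intro t; simp only [hu, Nat.mod_mod_of_dvd _ dvd_rfl]
  have hperu : ∀ t, u (t + L) = u t := by
    intro t; simp only [hu, Nat.add_mod_right]
  have hu0 : u 0 = v 0 := by simp [hu]
  have hult : ∀ r, 1 ≤ r → r < L → u r = v (r + 1) := by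
    intro r h1 hr; simp only [hu, Nat.mod_eq_of_lt hr]; rw [if_neg (by omega)]
  have husucc : ∀ r, 1 ≤ r → r < L → u (r + 1) = v (r + 2) := by
    intro r h1 hr
    rcases Nat.lt_or_ge (r + 1) L with h | h
    · rw [hult (r + 1) (by omega) h]
    · have h3 : u (r + 1) = v 0 := by simp [hu, show r + 1 = L by omega]
      rw [h3, show r + 2 = 0 + m by omega, hper]
  have hu1 : u 1 = v 2 := hult 1 le_rfl (by omega)
  have hedgu : ∀ t, B' (u t) (u (t + 1)) ≠ 0 := by
    apply edge_of_lt (by omega) huu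
    intro r hr
    rcases Nat.eq_or_lt_of_le (Nat.zero_le r) with h | h1
    · rw [← h, hu0, hu1]; exact hne1
    · rw [hult r h1 hr, husucc r h1 hr, hkeep (r + 1) (by omega) (by omega)]
      exact hedge (r + 1)
  have hIH : pF B' L u = pG B' L u := IH B' h2f' u hperu hedgu
  have hpF : pF B' L u = pF B m v := by
    unfold pF
    rw [show L = (m - 2) + 1 by omega, Finset.prod_range_succ']
    have e0 : |B' (u 0) (u 1)| = |B (v 0) (v 1)| * |B (v 1) (v 2)| := by
      rw [hu0, hu1]; exact habs1
    have erest : ∀ r ∈ Finset.range (m - 2),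
        |B' (u (r + 1)) (u (r + 1 + 1))| = |B (v (2 + r)) (v (2 + r + 1))| := by
      intro r hr
      rw [Finset.mem_range] at hr
      rw [hult (r + 1) (by omega) (by omega), husucc (r + 1) (by omega) (by omega),
        hkeep (r + 2) (by omega) (by omega), show r + 1 + 1 = 2 + r by omega]
    rw [Finset.prod_congr rfl erest, e0]
    rw [show m = 2 + (m - 2) by omega, Finset.prod_range_add]
    rw [show (2 + (m - 2) - 2) = m - 2 by omega]
    simp [Finset.prod_range_succ, mul_comm, mul_assoc, mul_left_comm]
  have hpG : pG B' L u = pG B m v := by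
    unfold pG
    rw [show L = (m - 2) + 1 by omega, Finset.prod_range_succ']
    have e0 : |B' (u 1) (u 0)| = |B (v 2) (v 1)| * |B (v 1) (v 0)| := by
      rw [hu0, hu1]; exact habs2
    have erest : ∀ r ∈ Finset.range (m - 2),
        |B' (u (r + 1 + 1)) (u (r + 1))| = |B (v (2 + r + 1)) (v (2 + r))| := by
      intro r hr
      rw [Finset.mem_range] at hr
      rw [hult (r + 1) (by omega) (by omega), husucc (r + 1) (by omega) (by omega),
        hkeepr (r + 2) (by omega) (by omega), show r + 1 + 1 = 2 + r by omega]
    rw [Finset.prod_congr rfl erest, e0]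
    rw [show m = 2 + (m - 2) by omega, Finset.prod_range_add]
    rw [show (2 + (m - 2) - 2) = m - 2 by omega]
    simp [Finset.prod_range_succ, mul_comm, mul_assoc, mul_left_comm]
  rw [← hpF, ← hpG, hIH]

end TFaux
namespace TFaux

/-- a cycle with a directed vertex anywhere -/
lemma dir_any {m : ℕ} (hm : 4 ≤ m) (IH : CycClaim (m - 1)) {n : ℕ}
    (B : Matrix (Fin n) (Fin n) ℤ) (h2f : TwoFinite B) :
    ∀ (k : ℕ) (v : ℕ → Fin n), (∀ t, v (t + m) = v t) → (∀ t, B (v t) (v (t + 1)) ≠ 0) →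
    (∀ s t, s < m → t < m → v s = v t → s = t) →
    (∀ s t, s < m → t < m → ¬adjc m s t → B (v s) (v t) = 0) →
    0 < B (v k) (v (k + 1)) * B (v (k + 1)) (v (k + 2)) →
    pF B m v = pG B m v := by
  intro k
  induction k with
  | zero =>
      intro v hper hedge hinj hz hdir
      exact step_dir hm IH B h2f v hper hedge hinj hz hdir
  | succ k ihk =>
      intro v hper hedge hinj hz hdir
      set v1 : ℕ → Fin n := fun t => v (t + 1) with hv1
      have hper1 : ∀ t, v1 (t + m) = v1 t := by
        intro t
        simp only [hv1]
        rw [show t + m + 1 = t + 1 + m by ring, hper]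
      have hedge1 : ∀ t, B (v1 t) (v1 (t + 1)) ≠ 0 := fun t => hedge (t + 1)
      have hmod : ∀ s : ℕ, s < m → (s + 1) % m = if s + 1 = m then 0 else s + 1 := by
        intro s hs; split_ifs with h
        · rw [h, Nat.mod_self]
        · exact Nat.mod_eq_of_lt (by omega)
      have hv1eq : ∀ s, v1 s = v ((s + 1) % m) := by
        intro s
        simp only [hv1]
        exact veq hper (Nat.mod_mod_of_dvd (s + 1) dvd_rfl).symm
      have hinj1 : ∀ s t, s < m → t < m → v1 s = v1 t → s = t := by
        intro s t hs ht h
        rw [hv1eq s, hv1eq t] at h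
        have h2 := hinj _ _ (Nat.mod_lt _ (by omega)) (Nat.mod_lt _ (by omega)) h
        rw [hmod s hs, hmod t ht] at h2
        split_ifs at h2 <;> omega
      have hz1 : ∀ s t, s < m → t < m → ¬adjc m s t → B (v1 s) (v1 t) = 0 := by
        intro s t hs ht hna
        rw [hv1eq s, hv1eq t]
        apply hz _ _ (Nat.mod_lt _ (by omega)) (Nat.mod_lt _ (by omega))
        rw [hmod s hs, hmod t ht]
        unfold adjc at hna ⊢
        split_ifs <;>
          simp only [false_or, or_false, false_and, and_false, and_true, true_and, not_or] <;>
          omega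
      have hdir1 : 0 < B (v1 k) (v1 (k + 1)) * B (v1 (k + 1)) (v1 (k + 2)) := hdir
      have hpf : pF B m v1 = pF B m v :=
        prod_shift1 (fun t => |B (v t) (v (t + 1))|) m (fper B hper)
      have hpg : pG B m v1 = pG B m v :=
        prod_shift1 (fun t => |B (v (t + 1)) (v t)|) m (gper B hper)
      rw [← hpf, ← hpg]
      exact ihk v1 hper1 hedge1 hinj1 hz1 hdir1

/-- the chordless case of the cycle lemma -/
lemma cyc_chordless {m : ℕ} (hm : 4 ≤ m) (IH : CycClaim (m - 1)) {n : ℕ}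
    (B : Matrix (Fin n) (Fin n) ℤ) (h2f : TwoFinite B) (v : ℕ → Fin n)
    (hper : ∀ t, v (t + m) = v t) (hedge : ∀ t, B (v t) (v (t + 1)) ≠ 0)
    (hinj : ∀ s t, s < m → t < m → v s = v t → s = t)
    (hz : ∀ s t, s < m → t < m → ¬adjc m s t → B (v s) (v t) = 0) :
    pF B m v = pG B m v := by
  by_cases hd0 : 0 < B (v 0) (v 1) * B (v 1) (v 2)
  · exact dir_any hm IH B h2f 0 v hper hedge hinj hz hd0
  by_cases hd1 : 0 < B (v 1) (v 2) * B (v 2) (v 3)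
  · exact dir_any hm IH B h2f 1 v hper hedge hinj hz hd1
  have hss := tf_sss h2f
  have hn0 : B (v 0) (v 1) * B (v 1) (v 2) < 0 :=
    (not_lt.mp hd0).lt_of_ne (mul_ne_zero (hedge 0) (hedge 1))
  have hn1 : B (v 1) (v 2) * B (v 2) (v 3) < 0 :=
    (not_lt.mp hd1).lt_of_ne (mul_ne_zero (hedge 1) (hedge 2))
  set C := mutZ (v 1) B with hC
  have h2fC : TwoFinite C := tf_mut h2f (v 1)
  have hne : ∀ s t : ℕ, s < m → t < m → s ≠ t → v s ≠ v t :=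
    fun s t hs ht hst h => hst (hinj s t hs ht h)
  have hvm : v m = v 0 := by rw [show m = 0 + m by omega, hper]
  -- how each edge entry changes
  have hedgeT : ∀ t, t < m →
      C (v t) (v (t + 1)) = -B (v t) (v (t + 1)) ∨
      C (v t) (v (t + 1)) = B (v t) (v (t + 1)) := by
    intro t ht
    rcases Nat.eq_or_lt_of_le (Nat.zero_le t) with h0 | h1
    · left; exact mutZ_right B _ (by rw [← h0])
    rcases Nat.eq_or_lt_of_le h1 with h1' | h2
    · left; exact mutZ_left B _ (by rw [← h1'])
    rcases Nat.eq_or_lt_of_le h2 with h2' | h3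
    · right
      refine mutZ_corr_right B (hne t 1 ht (by omega) (by omega)) ?_
        (hz 1 (t + 1) (by omega) (by omega) (by unfold adjc; omega))
      · rw [← h2']
        exact hne 3 1 (by omega) (by omega) (by omega)
    · right
      have hj : v (t + 1) ≠ v 1 := by
        rcases Nat.lt_or_ge (t + 1) m with h | h
        · exact hne (t + 1) 1 h (by omega) (by omega)
        · rw [show t + 1 = m by omega, hvm]
          exact hne 0 1 (by omega) (by omega) (by omega)
      exact mutZ_corr_left B (hne t 1 ht (by omega) (by omega)) hj
        (hz t 1 ht (by omega) (by unfold adjc; omega))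
  have hedgeTr : ∀ t, t < m →
      C (v (t + 1)) (v t) = -B (v (t + 1)) (v t) ∨
      C (v (t + 1)) (v t) = B (v (t + 1)) (v t) := by
    intro t ht
    rcases Nat.eq_or_lt_of_le (Nat.zero_le t) with h0 | h1
    · left; exact mutZ_left B _ (by rw [← h0])
    rcases Nat.eq_or_lt_of_le h1 with h1' | h2
    · left; exact mutZ_right B _ (by rw [← h1'])
    rcases Nat.eq_or_lt_of_le h2 with h2' | h3
    · right
      refine mutZ_corr_left B ?_ (hne t 1 ht (by omega) (by omega)) ?_
      · rw [← h2']
        exact hne 3 1 (by omega) (by omega) (by omega)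
      · rw [← h2']
        exact hz 3 1 (by omega) (by omega) (by unfold adjc; omega)
    · right
      have hi : v (t + 1) ≠ v 1 := by
        rcases Nat.lt_or_ge (t + 1) m with h | h
        · exact hne (t + 1) 1 h (by omega) (by omega)
        · rw [show t + 1 = m by omega, hvm]
          exact hne 0 1 (by omega) (by omega) (by omega)
      exact mutZ_corr_right B hi (hne t 1 ht (by omega) (by omega))
        (hz 1 t (by omega) ht (by unfold adjc; omega))
  have hedgeC : ∀ t, B (v t) (v (t + 1)) ≠ 0 → C (v t) (v (t + 1)) ≠ 0 := by
    intro t h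
    have h1 : v t = v (t % m) := vmod hper t
    have h2 : v (t + 1) = v (t % m + 1) := veq hper ((Nat.mod_modEq t m).symm.add_right 1)
    rw [h1, h2] at h ⊢
    rcases hedgeT (t % m) (Nat.mod_lt _ (by omega)) with hh | hh <;> rw [hh] <;> simpa using h
  have hedgeC' : ∀ t, C (v t) (v (t + 1)) ≠ 0 := fun t => hedgeC t (hedge t)
  -- the mutated matrix is directed at position 1
  have e12 : C (v 1) (v 2) = -B (v 1) (v 2) := mutZ_left B _ rfl
  have e23 : C (v 2) (v 3) = B (v 2) (v 3) :=
    mutZ_corr_right B (hne 2 1 (by omega) (by omega) (by omega))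
      (hne 3 1 (by omega) (by omega) (by omega))
      (hz 1 3 (by omega) (by omega) (by unfold adjc; omega))
  have hdirC : 0 < C (v 1) (v 2) * C (v 2) (v 3) := by
    rw [e12, e23, neg_mul, neg_pos]
    exact hn1
  -- chordlessness is preserved
  have hzC : ∀ s t, s < m → t < m → ¬adjc m s t → C (v s) (v t) = 0 := by
    intro s t hs ht hna
    have hst : s ≠ t := fun h => hna (Or.inl h)
    by_cases hs1 : s = 1
    · subst hs1
      rw [hC, mutZ_left B _ rfl, hz 1 t hs ht hna, neg_zero]
    by_cases ht1 : t = 1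
    · subst ht1
      rw [hC, mutZ_right B _ rfl, hz s 1 hs ht hna, neg_zero]
    have his : v s ≠ v 1 := hne s 1 hs (by omega) hs1
    have hit : v t ≠ v 1 := hne t 1 ht (by omega) ht1
    by_cases hs02 : s = 0 ∧ t = 2
    · obtain ⟨rfl, rfl⟩ := hs02
      rw [hC, mutZ_ne_ne B his hit, hz 0 2 hs ht hna, corr_nonpos hn0.le, add_zero]
    by_cases hs20 : s = 2 ∧ t = 0
    · obtain ⟨rfl, rfl⟩ := hs20
      have s01 : B (v 0) (v 1) * B (v 1) (v 0) < 0 := sss_neg hss (hedge 0)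
      have s12 : B (v 1) (v 2) * B (v 2) (v 1) < 0 := sss_neg hss (hedge 1)
      have hyy : B (v 2) (v 1) * B (v 1) (v 0) ≤ 0 := by nlinarith
      rw [hC, mutZ_ne_ne B his hit, hz 2 0 hs ht hna, corr_nonpos hyy, add_zero]
    by_cases hsx : s = 0 ∨ s = 2
    · -- then t ∉ {0,1,2}; use the right factor
      have htx : t ≠ 0 ∧ t ≠ 2 := by
        constructor <;> intro h <;> subst h
        · rcases hsx with h | h <;> subst h
          · exact hst rfl
          · exact hs20 ⟨rfl, rfl⟩
        · rcases hsx with h | h <;> subst h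
          · exact hs02 ⟨rfl, rfl⟩
          · exact hst rfl
      rw [hC, mutZ_corr_right B his hit
        (hz 1 t (by omega) ht (by unfold adjc; omega))]
      exact hz s t hs ht hna
    · -- s ∉ {0,1,2}; use the left factor
      rw [hC, mutZ_corr_left B his hit
        (hz s 1 hs (by omega) (by unfold adjc; omega))]
      exact hz s t hs ht hna
  -- products agree
  have hpFC : pF C m v = pF B m v := by
    unfold pF
    apply Finset.prod_congr rfl
    intro t ht
    rw [Finset.mem_range] at ht
    rcases hedgeT t ht with h | h <;> rw [h]
    exact abs_neg _
  have hpGC : pG C m v = pG B m v := by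
    unfold pG
    apply Finset.prod_congr rfl
    intro t ht
    rw [Finset.mem_range] at ht
    rcases hedgeTr t ht with h | h <;> rw [h]
    exact abs_neg _
  rw [← hpFC, ← hpGC]
  exact dir_any hm IH C h2fC 1 v hper hedgeC' hinj hzC hdirC

end TFaux
namespace TFaux

theorem cyc : ∀ m : ℕ, CycClaim m := by
  intro m
  induction m using Nat.strong_induction_on with
  | _ m IH =>
    intro n B h2f v hper hedge
    have hss := tf_sss h2f
    rcases Nat.lt_or_ge m 4 with hm | hm
    · interval_cases m
      · simp [pF, pG]
      · exfalso
        apply hedge 0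
        rw [show v 1 = v 0 from hper 0]
        exact sss_diag hss (v 0)
      · unfold pF pG
        simp only [Finset.prod_range_succ, Finset.prod_range_zero, one_mul]
        rw [show v 2 = v 0 from hper 0]
        ring
      · have h30 : v 3 = v 0 := hper 0
        have e0 := hedge 0
        have e1 := hedge 1
        have e2 : B (v 2) (v 0) ≠ 0 := by rw [← h30]; exact hedge 2
        have d01 : v 0 ≠ v 1 := by
          intro h; apply e0; rw [h]; exact sss_diag hss (v 1)
        have d12 : v 1 ≠ v 2 := by
          intro h; apply e1; rw [h]; exact sss_diag hss (v 2)
        have d02 : v 0 ≠ v 2 := by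
          intro h; apply e2; rw [← h]; exact sss_diag hss (v 0)
        have htri := triangle h2f d01 d12 d02 e0 e1 e2
        unfold pF pG
        simp only [Finset.prod_range_succ, Finset.prod_range_zero, one_mul, h30]
        rw [← abs_mul, ← abs_mul, ← abs_mul, ← abs_mul]
        exact htri
    · by_cases hrep : ∃ a b, a < b ∧ b < m ∧ v a = v b
      · obtain ⟨a, b, h1, h2, h3⟩ := hrep
        exact cyc_repeat IH B h2f v hper hedge a b h1 h2 h3
      have hinj : ∀ s t, s < m → t < m → v s = v t → s = t := by
        intro s t hs ht h
        by_contra hne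
        rcases Nat.lt_or_ge s t with hlt | hge
        · exact hrep ⟨s, t, hlt, ht, h⟩
        · exact hrep ⟨t, s, by omega, hs, h.symm⟩
      by_cases hch : ∃ s t, s < m ∧ t < m ∧ ¬adjc m s t ∧ B (v s) (v t) ≠ 0
      · obtain ⟨s, t, h1, h2, h3, h4⟩ := hch
        exact cyc_chord IH B h2f v hper hedge s t h1 h2 h3 h4
      have hz : ∀ s t, s < m → t < m → ¬adjc m s t → B (v s) (v t) = 0 := by
        intro s t hs ht hna
        by_contra h
        exact hch ⟨s, t, hs, ht, hna, h⟩
      exact cyc_chordless hm (IH (m - 1) (by omega)) B h2f v hper hedge hinj hz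

end TFaux
namespace TFaux

def HasRatio {n : ℕ} (B : Matrix (Fin n) (Fin n) ℤ) (x y : Fin n) (q : ℚ) : Prop :=
  ∃ (m : ℕ) (v : ℕ → Fin n), v 0 = x ∧ v m = y ∧ (∀ t, t < m → B (v t) (v (t + 1)) ≠ 0) ∧
    q * ∏ t ∈ Finset.range m, ((|B (v (t + 1)) (v t)| : ℤ) : ℚ)
      = ∏ t ∈ Finset.range m, ((|B (v t) (v (t + 1))| : ℤ) : ℚ)

lemma hr_refl {n : ℕ} (B : Matrix (Fin n) (Fin n) ℤ) (x : Fin n) : HasRatio B x x 1 :=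
  ⟨0, fun _ => x, rfl, rfl, fun t ht => absurd ht (by omega), by simp⟩

lemma fwd_pos {n : ℕ} {B : Matrix (Fin n) (Fin n) ℤ} {m : ℕ} {v : ℕ → Fin n}
    (hev : ∀ t, t < m → B (v t) (v (t + 1)) ≠ 0) :
    0 < ∏ t ∈ Finset.range m, ((|B (v t) (v (t + 1))| : ℤ) : ℚ) := by
  apply Finset.prod_pos
  intro t ht
  rw [Finset.mem_range] at ht
  exact_mod_cast abs_pos.mpr (hev t ht)

lemma bwd_pos {n : ℕ} {B : Matrix (Fin n) (Fin n) ℤ} (hss : SignSkewSymmetric B)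
    {m : ℕ} {v : ℕ → Fin n} (hev : ∀ t, t < m → B (v t) (v (t + 1)) ≠ 0) :
    0 < ∏ t ∈ Finset.range m, ((|B (v (t + 1)) (v t)| : ℤ) : ℚ) := by
  apply Finset.prod_pos
  intro t ht
  rw [Finset.mem_range] at ht
  exact_mod_cast abs_pos.mpr (sss_ne hss (hev t ht))

lemma hr_pos {n : ℕ} {B : Matrix (Fin n) (Fin n) ℤ} (hss : SignSkewSymmetric B)
    {x y : Fin n} {q : ℚ} (h : HasRatio B x y q) : 0 < q := by
  obtain ⟨m, v, hv0, hvm, hev, hq⟩ := h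
  have h1 := fwd_pos hev
  have h2 := bwd_pos hss hev
  nlinarith

lemma hr_step {n : ℕ} {B : Matrix (Fin n) (Fin n) ℤ} (hss : SignSkewSymmetric B)
    {x y z : Fin n} {q : ℚ} (h : HasRatio B x y q) (he : B y z ≠ 0) :
    HasRatio B x z (q * ((|B y z| : ℤ) : ℚ) / ((|B z y| : ℤ) : ℚ)) := by
  obtain ⟨m, v, hv0, hvm, hev, hq⟩ := h
  set w : ℕ → Fin n := fun t => if t ≤ m then v t else z with hw
  have hwlt : ∀ t, t ≤ m → w t = v t := by intro t ht; simp only [hw, if_pos ht]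
  have hwgt : ∀ t, m < t → w t = z := by
    intro t ht; simp only [hw]; rw [if_neg (by omega : ¬ t ≤ m)]
  refine ⟨m + 1, w, by rw [hwlt 0 (by omega), hv0], by rw [hwgt (m + 1) (by omega)], ?_, ?_⟩
  · intro t ht
    rcases Nat.lt_or_ge t m with h1 | h1
    · rw [hwlt t (by omega), hwlt (t + 1) (by omega)]
      exact hev t h1
    · have h2 : t = m := by omega
      subst h2
      rw [hwlt t le_rfl, hwgt (t + 1) (by omega), hvm]
      exact he
  · have hzy : ((|B z y| : ℤ) : ℚ) ≠ 0 := by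
      exact_mod_cast abs_ne_zero.mpr (sss_ne hss he)
    rw [Finset.prod_range_succ, Finset.prod_range_succ]
    have e1 : ∀ t ∈ Finset.range m,
        ((|B (w (t + 1)) (w t)| : ℤ) : ℚ) = ((|B (v (t + 1)) (v t)| : ℤ) : ℚ) := by
      intro t ht
      rw [Finset.mem_range] at ht
      rw [hwlt t (by omega), hwlt (t + 1) (by omega)]
    have e2 : ∀ t ∈ Finset.range m,
        ((|B (w t) (w (t + 1))| : ℤ) : ℚ) = ((|B (v t) (v (t + 1))| : ℤ) : ℚ) := by
      intro t ht
      rw [Finset.mem_range] at ht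
      rw [hwlt t (by omega), hwlt (t + 1) (by omega)]
    rw [Finset.prod_congr rfl e1, Finset.prod_congr rfl e2,
      hwlt m le_rfl, hwgt (m + 1) (by omega), hvm]
    have key : ∀ (a b G F : ℚ), b ≠ 0 → q * G = F → q * a / b * (G * b) = F * a := by
      intro a b G F hb hqq
      rw [← hqq]
      field_simp
    exact key _ _ _ _ hzy hq

lemma hr_inv {n : ℕ} {B : Matrix (Fin n) (Fin n) ℤ} (hss : SignSkewSymmetric B)
    {x y : Fin n} {q : ℚ} (h : HasRatio B x y q) : HasRatio B y x q⁻¹ := by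
  have hqpos := hr_pos hss h
  obtain ⟨m, v, hv0, hvm, hev, hq⟩ := h
  set w : ℕ → Fin n := fun t => v (m - t) with hw
  have hwval : ∀ t, w t = v (m - t) := fun t => rfl
  refine ⟨m, w, by rw [hwval, Nat.sub_zero, hvm], by rw [hwval, Nat.sub_self, hv0], ?_, ?_⟩
  · intro t ht
    rw [hwval t, hwval (t + 1)]
    have e1 : m - t = (m - t - 1) + 1 := by omega
    rw [show m - (t + 1) = m - t - 1 by omega, e1]
    exact sss_ne hss (hev (m - t - 1) (by omega))
  · have eF : (∏ t ∈ Finset.range m, ((|B (w t) (w (t + 1))| : ℤ) : ℚ))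
        = ∏ t ∈ Finset.range m, ((|B (v (t + 1)) (v t)| : ℤ) : ℚ) := by
      rw [← Finset.prod_range_reflect]
      apply Finset.prod_congr rfl
      intro t ht
      rw [Finset.mem_range] at ht
      rw [hwval (m - 1 - t), hwval (m - 1 - t + 1),
        show m - (m - 1 - t) = t + 1 by omega, show m - (m - 1 - t + 1) = t by omega]
    have eG : (∏ t ∈ Finset.range m, ((|B (w (t + 1)) (w t)| : ℤ) : ℚ))
        = ∏ t ∈ Finset.range m, ((|B (v t) (v (t + 1))| : ℤ) : ℚ) := by
      rw [← Finset.prod_range_reflect]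
      apply Finset.prod_congr rfl
      intro t ht
      rw [Finset.mem_range] at ht
      rw [hwval (m - 1 - t), hwval (m - 1 - t + 1),
        show m - (m - 1 - t) = t + 1 by omega, show m - (m - 1 - t + 1) = t by omega]
    have hqne : q ≠ 0 := ne_of_gt hqpos
    rw [eF, eG, ← hq, inv_mul_cancel_left₀ hqne]

lemma hr_comp {n : ℕ} {B : Matrix (Fin n) (Fin n) ℤ} {x y z : Fin n} {q q' : ℚ}
    (h1 : HasRatio B x y q) (h2 : HasRatio B y z q') : HasRatio B x z (q * q') := by
  obtain ⟨m, v, hv0, hvm, hev, hq⟩ := h1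
  obtain ⟨m', u, hu0, hum, heu, hq'⟩ := h2
  set w : ℕ → Fin n := fun t => if t ≤ m then v t else u (t - m) with hw
  have hwlt : ∀ t, t ≤ m → w t = v t := by intro t ht; simp only [hw, if_pos ht]
  have hwge : ∀ t, m ≤ t → w t = u (t - m) := by
    intro t ht
    rcases Nat.eq_or_lt_of_le ht with h | h
    · rw [← h]; simp only [hw, if_pos le_rfl, Nat.sub_self, hu0, hvm]
    · simp only [hw]; rw [if_neg (by omega : ¬ t ≤ m)]
  refine ⟨m + m', w, by rw [hwlt 0 (by omega), hv0], by
      rw [hwge (m + m') (by omega), Nat.add_sub_cancel_left, hum], ?_, ?_⟩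
  · intro t ht
    rcases Nat.lt_or_ge t m with h | h
    · rw [hwlt t (by omega), hwlt (t + 1) (by omega)]
      exact hev t h
    · rw [hwge t h, hwge (t + 1) (by omega), show t + 1 - m = (t - m) + 1 by omega]
      exact heu (t - m) (by omega)
  · have eF : ∀ t ∈ Finset.range m,
        ((|B (w t) (w (t + 1))| : ℤ) : ℚ) = ((|B (v t) (v (t + 1))| : ℤ) : ℚ) := by
      intro t ht; rw [Finset.mem_range] at ht
      rw [hwlt t (by omega), hwlt (t + 1) (by omega)]
    have eG : ∀ t ∈ Finset.range m,
        ((|B (w (t + 1)) (w t)| : ℤ) : ℚ) = ((|B (v (t + 1)) (v t)| : ℤ) : ℚ) := by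
      intro t ht; rw [Finset.mem_range] at ht
      rw [hwlt t (by omega), hwlt (t + 1) (by omega)]
    have eF' : ∀ t ∈ Finset.range m',
        ((|B (w (m + t)) (w (m + t + 1))| : ℤ) : ℚ) = ((|B (u t) (u (t + 1))| : ℤ) : ℚ) := by
      intro t ht; rw [Finset.mem_range] at ht
      rw [hwge (m + t) (by omega), hwge (m + t + 1) (by omega),
        Nat.add_sub_cancel_left, show m + t + 1 - m = t + 1 by omega]
    have eG' : ∀ t ∈ Finset.range m',
        ((|B (w (m + t + 1)) (w (m + t))| : ℤ) : ℚ) = ((|B (u (t + 1)) (u t)| : ℤ) : ℚ) := by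
      intro t ht; rw [Finset.mem_range] at ht
      rw [hwge (m + t) (by omega), hwge (m + t + 1) (by omega),
        Nat.add_sub_cancel_left, show m + t + 1 - m = t + 1 by omega]
    rw [Finset.prod_range_add, Finset.prod_range_add]
    rw [Finset.prod_congr rfl eF, Finset.prod_congr rfl eG,
      Finset.prod_congr rfl eF', Finset.prod_congr rfl eG']
    rw [← hq, ← hq']
    ring

lemma hr_closed {n : ℕ} {B : Matrix (Fin n) (Fin n) ℤ} (h2f : TwoFinite B)
    {x : Fin n} {q : ℚ} (h : HasRatio B x x q) : q = 1 := by
  have hss := tf_sss h2f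
  obtain ⟨m, v, hv0, hvm, hev, hq⟩ := h
  rcases Nat.eq_or_lt_of_le (Nat.zero_le m) with h0 | h0
  · rw [← h0] at hq
    simpa using hq
  set w : ℕ → Fin n := fun t => v (t % m) with hw
  have hww : ∀ t, w t = w (t % m) := by
    intro t; simp only [hw, Nat.mod_mod_of_dvd _ dvd_rfl]
  have hperw : ∀ t, w (t + m) = w t := by
    intro t; simp only [hw, Nat.add_mod_right]
  have hwlt : ∀ r, r < m → w r = v r := by
    intro r hr; simp only [hw, Nat.mod_eq_of_lt hr]
  have hwsucc : ∀ r, r < m → w (r + 1) = v (r + 1) := by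
    intro r hr
    rcases Nat.lt_or_ge (r + 1) m with h | h
    · exact hwlt (r + 1) h
    · have h1 : r + 1 = m := by omega
      simp only [hw, h1, Nat.mod_self, hv0, hvm]
  have hedgw : ∀ t, B (w t) (w (t + 1)) ≠ 0 := by
    apply edge_of_lt h0 hww
    intro r hr
    rw [hwlt r hr, hwsucc r hr]
    exact hev r hr
  have hcyc := cyc m B h2f w hperw hedgw
  unfold pF pG at hcyc
  have eF : ∏ t ∈ Finset.range m, |B (w t) (w (t + 1))|
      = ∏ t ∈ Finset.range m, |B (v t) (v (t + 1))| := by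
    apply Finset.prod_congr rfl
    intro t ht; rw [Finset.mem_range] at ht
    rw [hwlt t ht, hwsucc t ht]
  have eG : ∏ t ∈ Finset.range m, |B (w (t + 1)) (w t)|
      = ∏ t ∈ Finset.range m, |B (v (t + 1)) (v t)| := by
    apply Finset.prod_congr rfl
    intro t ht; rw [Finset.mem_range] at ht
    rw [hwlt t ht, hwsucc t ht]
  rw [eF, eG] at hcyc
  have hcast : (∏ t ∈ Finset.range m, ((|B (v t) (v (t + 1))| : ℤ) : ℚ))
      = ∏ t ∈ Finset.range m, ((|B (v (t + 1)) (v t)| : ℤ) : ℚ) := by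
    exact_mod_cast hcyc
  have hbpos := bwd_pos hss hev
  rw [hcast] at hq
  have h6 : q * (∏ t ∈ Finset.range m, ((|B (v (t + 1)) (v t)| : ℤ) : ℚ))
      = 1 * (∏ t ∈ Finset.range m, ((|B (v (t + 1)) (v t)| : ℤ) : ℚ)) := by
    rw [one_mul]; exact hq
  exact mul_right_cancel₀ (ne_of_gt hbpos) h6

lemma hr_unique {n : ℕ} {B : Matrix (Fin n) (Fin n) ℤ} (h2f : TwoFinite B)
    {x y : Fin n} {q q' : ℚ} (h1 : HasRatio B x y q) (h2 : HasRatio B x y q') : q = q' := by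
  have hss := tf_sss h2f
  have h3 : HasRatio B x x (q * q'⁻¹) := hr_comp h1 (hr_inv hss h2)
  have h4 := hr_closed h2f h3
  have hq' : q' ≠ 0 := ne_of_gt (hr_pos hss h2)
  field_simp at h4
  exact h4

end TFaux
namespace TFaux

abbrev Reach {n : ℕ} (B : Matrix (Fin n) (Fin n) ℤ) : Fin n → Fin n → Prop :=
  Relation.ReflTransGen (fun a b => B a b ≠ 0)

lemma reach_ratio {n : ℕ} {B : Matrix (Fin n) (Fin n) ℤ} (hss : SignSkewSymmetric B)
    {x y : Fin n} (h : Reach B x y) : ∃ q, HasRatio B x y q := by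
  induction h with
  | refl => exact ⟨1, hr_refl B x⟩
  | tail h1 h2 ih =>
      obtain ⟨q, hq⟩ := ih
      exact ⟨_, hr_step hss hq h2⟩

end TFaux

theorem two_finite_skew_symmetrizable' {n : ℕ} (B : Matrix (Fin n) (Fin n) ℤ)
    (h2f : TwoFinite B) :
    ∃ d : Fin n → ℚ, (∀ i, 0 < d i) ∧
      ∀ i j, d i * (B i j : ℚ) = -(d j * (B j i : ℚ)) := by
  classical
  have hss := TFaux.tf_sss h2f
  have hne : ∀ i : Fin n, (Finset.univ.filter (fun j => TFaux.Reach B j i)).Nonempty := by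
    intro i
    exact ⟨i, by
      simp only [Finset.mem_filter, Finset.mem_univ, true_and]
      exact Relation.ReflTransGen.refl⟩
  set base : Fin n → Fin n :=
    fun i => (Finset.univ.filter (fun j => TFaux.Reach B j i)).min' (hne i) with hbase
  have hreach : ∀ i, TFaux.Reach B (base i) i := by
    intro i
    exact (Finset.mem_filter.mp (Finset.min'_mem _ (hne i))).2
  choose d hd using fun i => TFaux.reach_ratio hss (hreach i)
  refine ⟨d, fun i => TFaux.hr_pos hss (hd i), ?_⟩
  intro i j
  by_cases hij : B i j = 0
  · have hji : B j i = 0 := by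
      rcases hss i j with ⟨h1, h2⟩ | h1
      · exact h2
      · exfalso; rw [hij] at h1; simp at h1
    rw [hij, hji]
    push_cast
    ring
  · have hji : B j i ≠ 0 := TFaux.sss_ne hss hij
    have hbij : base i = base j := by
      have hset : (Finset.univ.filter fun k => TFaux.Reach B k i)
          = (Finset.univ.filter fun k => TFaux.Reach B k j) := by
        ext k
        simp only [Finset.mem_filter, Finset.mem_univ, true_and]
        constructor
        · intro h; exact h.tail hij
        · intro h; exact h.tail hji
      have hgen : ∀ (s t : Finset (Fin n)) (hs : s.Nonempty) (ht : t.Nonempty),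
          s = t → s.min' hs = t.min' ht := by
        rintro s t hs ht rfl; rfl
      exact hgen _ _ _ _ hset
    have h1 : TFaux.HasRatio B (base i) j (d i * ((|B i j| : ℤ) : ℚ) / ((|B j i| : ℤ) : ℚ)) :=
      TFaux.hr_step hss (hd i) hij
    have h2 : TFaux.HasRatio B (base i) j (d j) := by rw [hbij]; exact hd j
    have heq := TFaux.hr_unique h2f h2 h1
    have hne2 : ((|B j i| : ℤ) : ℚ) ≠ 0 := by exact_mod_cast abs_ne_zero.mpr hji
    have habs : d j * ((|B j i| : ℤ) : ℚ) = d i * ((|B i j| : ℤ) : ℚ) := by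
      rw [heq]
      field_simp
    have hprod : B i j * B j i < 0 := TFaux.sss_neg hss hij
    rcases lt_trichotomy (B i j) 0 with hs | hs | hs
    · have hs2 : 0 < B j i := by nlinarith
      rw [abs_of_neg hs, abs_of_pos hs2] at habs
      push_cast at habs ⊢
      linarith
    · exact absurd hs hij
    · have hs2 : B j i < 0 := by nlinarith
      rw [abs_of_pos hs, abs_of_neg hs2] at habs
      push_cast at habs ⊢
      linarith

/-- Every 2-finite matrix is skew-symmetrizable: there is a diagonal matrix
`D = diag d` with positive diagonal entries such that `D B` is skew-symmetric. -/
theorem two_finite_skew_symmetrizable {n : ℕ} (B : Matrix (Fin n) (Fin n) ℤ)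
    (h2f : TwoFinite B) :
    ∃ d : Fin n → ℚ, (∀ i, 0 < d i) ∧
      ∀ i j, d i * (B i j : ℚ) = -(d j * (B j i : ℚ)) := by
  exact two_finite_skew_symmetrizable' B h2f
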